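/- The Petersen graph has edge chromatic number 4; in particular, it admits no proper edge 3-coloring. -/

import Mathlib

def IsProperEdgeColoring {V : Type*} (G : SimpleGraph V) {k : ℕ}
    (c : Sym2 V → Fin k) : Prop :=
  ∀ e ∈ G.edgeSet, ∀ f ∈ G.edgeSet, e ≠ f → (∃ v, v ∈ e ∧ v ∈ f) → c e ≠ c f

def EdgeColorable {V : Type*} (G : SimpleGraph V) (k : ℕ) : Prop :=
  ∃ c : Sym2 V → Fin k, IsProperEdgeColoring G c

noncomputable def edgeChromaticNumber {V : Type*} (G : SimpleGraph V) : ℕ :=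
  sInf {k | EdgeColorable G k}

/-- The Petersen graph as the Kneser graph K(5,2): vertices are 2-element
subsets of a 5-element set, adjacent iff disjoint. -/
def petersen : SimpleGraph {s : Finset (Fin 5) // s.card = 2} where
  Adj s t := Disjoint s.val t.val
  symm := ⟨fun s t h => h.symm⟩
  loopless := ⟨by
    intro s h
    beta_reduce at h
    rw [disjoint_self] at h
    have h2 := s.2
    rw [h] at h2
    simp at h2⟩

/-! ### Auxiliary setup -/

abbrev PV := {s : Finset (Fin 5) // s.card = 2}

instance : DecidableRel petersen.Adj := fun s t =>
  inferInstanceAs (Decidable (Disjoint s.val t.val))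

/-- A 2-element subset of `Fin 5` as a vertex of the Petersen graph. -/
def pv (a b : Fin 5) (h : ({a,b} : Finset (Fin 5)).card = 2 := by decide) : PV := ⟨{a,b}, h⟩

/-- The fifteen edges of the Petersen graph. -/
def pE : ℕ → Sym2 PV
  | 0 => s(pv 0 1, pv 2 3)
  | 1 => s(pv 0 2, pv 1 3)
  | 2 => s(pv 0 3, pv 1 2)
  | 3 => s(pv 0 1, pv 2 4)
  | 4 => s(pv 0 2, pv 1 4)
  | 5 => s(pv 0 4, pv 1 2)
  | 6 => s(pv 0 1, pv 3 4)
  | 7 => s(pv 0 3, pv 1 4)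
  | 8 => s(pv 0 4, pv 1 3)
  | 9 => s(pv 0 2, pv 3 4)
  | 10 => s(pv 0 3, pv 2 4)
  | 11 => s(pv 0 4, pv 2 3)
  | 12 => s(pv 1 2, pv 3 4)
  | 13 => s(pv 1 3, pv 2 4)
  | _ => s(pv 1 4, pv 2 3)

/-- An explicit proper 4-edge-coloring of the Petersen graph. -/
def pc4 : Sym2 PV → Fin 4 := fun e =>
  if e = pE 0 then 0
  else if e = pE 1 then 0
  else if e = pE 2 then 0
  else if e = pE 3 then 1
  else if e = pE 4 then 1
  else if e = pE 5 then 2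
  else if e = pE 6 then 2
  else if e = pE 7 then 2
  else if e = pE 8 then 3
  else if e = pE 9 then 3
  else if e = pE 10 then 3
  else if e = pE 11 then 1
  else if e = pE 12 then 1
  else if e = pE 13 then 2
  else 3

set_option maxHeartbeats 4000000 in
lemma pc4_proper : IsProperEdgeColoring petersen pc4 := by
  unfold IsProperEdgeColoring
  decide

set_option maxHeartbeats 4000000 in
set_option synthInstance.maxHeartbeats 2000000 in
set_option synthInstance.maxSize 2000 in
/-- Exhaustive (pruned) search: there is no proper 3-coloring of the 15 edges of
the Petersen graph.  The variables `yᵢ` stand for the color of edge `pE i`, and the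
hypotheses are exactly the 30 adjacency constraints. -/
lemma petersenKey : ∀ y0 y3 : Fin 3, y3 ≠ y0 → ∀ y6 : Fin 3, y6 ≠ y0 → y6 ≠ y3 →
    ∀ y11 : Fin 3, y11 ≠ y0 → ∀ y14 : Fin 3, y14 ≠ y0 → y14 ≠ y11 →
    ∀ y10 : Fin 3, y10 ≠ y3 → ∀ y13 : Fin 3, y13 ≠ y3 → y13 ≠ y10 →
    ∀ y9 : Fin 3, y9 ≠ y6 → ∀ y12 : Fin 3, y12 ≠ y6 → y12 ≠ y9 →
    ∀ y2 : Fin 3, y2 ≠ y10 → y2 ≠ y12 →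
    ∀ y5 : Fin 3, y5 ≠ y2 → y5 ≠ y12 → y5 ≠ y11 →
    ∀ y7 : Fin 3, y7 ≠ y2 → y7 ≠ y10 → y7 ≠ y14 →
    ∀ y8 : Fin 3, y8 ≠ y5 → y8 ≠ y11 → y8 ≠ y13 →
    ∀ y1 : Fin 3, y1 ≠ y8 → y1 ≠ y13 → y1 ≠ y9 →
    ∀ y4 : Fin 3, y4 ≠ y1 → y4 ≠ y9 → y4 ≠ y7 → y4 ≠ y14 → False := by
  decide

lemma not_edgeColorable_three : ¬ EdgeColorable petersen 3 := by
  rintro ⟨c, hc⟩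
  have h3_0 : c (pE 3) ≠ c (pE 0) := hc (pE 3) (by decide) (pE 0) (by decide) (by decide) (by decide)
  have h6_0 : c (pE 6) ≠ c (pE 0) := hc (pE 6) (by decide) (pE 0) (by decide) (by decide) (by decide)
  have h6_3 : c (pE 6) ≠ c (pE 3) := hc (pE 6) (by decide) (pE 3) (by decide) (by decide) (by decide)
  have h11_0 : c (pE 11) ≠ c (pE 0) := hc (pE 11) (by decide) (pE 0) (by decide) (by decide) (by decide)
  have h14_0 : c (pE 14) ≠ c (pE 0) := hc (pE 14) (by decide) (pE 0) (by decide) (by decide) (by decide)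
  have h14_11 : c (pE 14) ≠ c (pE 11) := hc (pE 14) (by decide) (pE 11) (by decide) (by decide) (by decide)
  have h10_3 : c (pE 10) ≠ c (pE 3) := hc (pE 10) (by decide) (pE 3) (by decide) (by decide) (by decide)
  have h13_3 : c (pE 13) ≠ c (pE 3) := hc (pE 13) (by decide) (pE 3) (by decide) (by decide) (by decide)
  have h13_10 : c (pE 13) ≠ c (pE 10) := hc (pE 13) (by decide) (pE 10) (by decide) (by decide) (by decide)
  have h9_6 : c (pE 9) ≠ c (pE 6) := hc (pE 9) (by decide) (pE 6) (by decide) (by decide) (by decide)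
  have h12_6 : c (pE 12) ≠ c (pE 6) := hc (pE 12) (by decide) (pE 6) (by decide) (by decide) (by decide)
  have h12_9 : c (pE 12) ≠ c (pE 9) := hc (pE 12) (by decide) (pE 9) (by decide) (by decide) (by decide)
  have h2_10 : c (pE 2) ≠ c (pE 10) := hc (pE 2) (by decide) (pE 10) (by decide) (by decide) (by decide)
  have h2_12 : c (pE 2) ≠ c (pE 12) := hc (pE 2) (by decide) (pE 12) (by decide) (by decide) (by decide)
  have h5_2 : c (pE 5) ≠ c (pE 2) := hc (pE 5) (by decide) (pE 2) (by decide) (by decide) (by decide)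
  have h5_12 : c (pE 5) ≠ c (pE 12) := hc (pE 5) (by decide) (pE 12) (by decide) (by decide) (by decide)
  have h5_11 : c (pE 5) ≠ c (pE 11) := hc (pE 5) (by decide) (pE 11) (by decide) (by decide) (by decide)
  have h7_2 : c (pE 7) ≠ c (pE 2) := hc (pE 7) (by decide) (pE 2) (by decide) (by decide) (by decide)
  have h7_10 : c (pE 7) ≠ c (pE 10) := hc (pE 7) (by decide) (pE 10) (by decide) (by decide) (by decide)
  have h7_14 : c (pE 7) ≠ c (pE 14) := hc (pE 7) (by decide) (pE 14) (by decide) (by decide) (by decide)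
  have h8_5 : c (pE 8) ≠ c (pE 5) := hc (pE 8) (by decide) (pE 5) (by decide) (by decide) (by decide)
  have h8_11 : c (pE 8) ≠ c (pE 11) := hc (pE 8) (by decide) (pE 11) (by decide) (by decide) (by decide)
  have h8_13 : c (pE 8) ≠ c (pE 13) := hc (pE 8) (by decide) (pE 13) (by decide) (by decide) (by decide)
  have h1_8 : c (pE 1) ≠ c (pE 8) := hc (pE 1) (by decide) (pE 8) (by decide) (by decide) (by decide)
  have h1_13 : c (pE 1) ≠ c (pE 13) := hc (pE 1) (by decide) (pE 13) (by decide) (by decide) (by decide)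
  have h1_9 : c (pE 1) ≠ c (pE 9) := hc (pE 1) (by decide) (pE 9) (by decide) (by decide) (by decide)
  have h4_1 : c (pE 4) ≠ c (pE 1) := hc (pE 4) (by decide) (pE 1) (by decide) (by decide) (by decide)
  have h4_9 : c (pE 4) ≠ c (pE 9) := hc (pE 4) (by decide) (pE 9) (by decide) (by decide) (by decide)
  have h4_7 : c (pE 4) ≠ c (pE 7) := hc (pE 4) (by decide) (pE 7) (by decide) (by decide) (by decide)
  have h4_14 : c (pE 4) ≠ c (pE 14) := hc (pE 4) (by decide) (pE 14) (by decide) (by decide) (by decide)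
  exact petersenKey (c (pE 0)) (c (pE 3)) h3_0 (c (pE 6)) h6_0 h6_3 (c (pE 11)) h11_0 (c (pE 14)) h14_0 h14_11 (c (pE 10)) h10_3 (c (pE 13)) h13_3 h13_10 (c (pE 9)) h9_6 (c (pE 12)) h12_6 h12_9 (c (pE 2)) h2_10 h2_12 (c (pE 5)) h5_2 h5_12 h5_11 (c (pE 7)) h7_2 h7_10 h7_14 (c (pE 8)) h8_5 h8_11 h8_13 (c (pE 1)) h1_8 h1_13 h1_9 (c (pE 4)) h4_1 h4_9 h4_7 h4_14

lemma edgeColorable_mono {k l : ℕ} (h : k ≤ l) (hk : EdgeColorable petersen k) :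
    EdgeColorable petersen l := by
  obtain ⟨c, hc⟩ := hk
  refine ⟨fun e => Fin.castLE h (c e), ?_⟩
  intro e he f hf hef hv hcontra
  exact hc e he f hf hef hv (Fin.castLE_injective h hcontra)

/-- The Petersen graph has edge chromatic number 4; in particular it has no
proper edge 3-coloring. -/
theorem petersen_edgeChromaticNumber :
    edgeChromaticNumber petersen = 4 ∧ ¬ EdgeColorable petersen 3 := by
  refine ⟨?_, not_edgeColorable_three⟩
  have h4 : EdgeColorable petersen 4 := ⟨pc4, pc4_proper⟩
  refine le_antisymm (Nat.sInf_le h4) (le_csInf ⟨4, h4⟩ ?_)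
  intro k hk
  by_contra hlt
  push_neg at hlt
  exact not_edgeColorable_three
    (edgeColorable_mono (by omega : k ≤ 3) hk)
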